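/- Let (X,d) be a rectifiable path connected metric space, x,y ∈ X, and A ⊆ X. If X is pointwise Λ_z-quasiconvex at z ∈ X, then the local Lipschitz constant of the position function pos_A at z satisfies lip(pos_A)(z) ≤ Λ_z. If moreover z lies outside the closure of A and X is pointwise quasiconvex, then lip(pos_A)(z) = 0. If X is Λ-quasiconvex, then pos_A is Λ-Lipschitz. -/

import Mathlib

open MeasureTheory Metric Set Filter
open scoped ENNReal NNReal

noncomputable section

/-- A rectifiable curve from `x` to `y`, encoded via a `1`-Lipschitz
(arclength-type) parametrization on `[0, T]`. -/
structure RectCurve (X : Type*) [MetricSpace X] (x y : X) where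
  T : ℝ
  T_nonneg : 0 ≤ T
  toFun : ℝ → X
  lip : LipschitzOnWith 1 toFun (Set.Icc 0 T)
  source : toFun 0 = x
  target : toFun T = y

/-- Length spent by the curve inside `A` up to time `s`. -/
def RectCurve.lengthInUpTo {X : Type*} [MetricSpace X] {x y : X}
    (c : RectCurve X x y) (A : Set X) (s : ℝ) : ℝ≥0∞ :=
  volume {t : ℝ | t ∈ Set.Icc 0 (min s c.T) ∧ c.toFun t ∈ A}

/-- Total length spent by the curve inside `A`. -/
def RectCurve.lengthIn {X : Type*} [MetricSpace X] {x y : X}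
    (c : RectCurve X x y) (A : Set X) : ℝ≥0∞ :=
  c.lengthInUpTo A c.T

/-- Length of the curve. -/
def RectCurve.length {X : Type*} [MetricSpace X] {x y : X}
    (c : RectCurve X x y) : ℝ≥0∞ :=
  eVariationOn c.toFun (Set.Icc 0 c.T)

/-- The width of `A` with respect to `x, y`: infimum over rectifiable curves
from `x` to `y` of the length spent inside `A` (`∞` if there is no such curve). -/
def width {X : Type*} [MetricSpace X] (x y : X) (A : Set X) : ℝ≥0∞ :=
  ⨅ c : RectCurve X x y, c.lengthIn A

/-- The position function of the set `A` with respect to `x, y`. -/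
def posFn {X : Type*} [MetricSpace X] (x y : X) (A : Set X) (z : X) : ℝ≥0∞ :=
  ⨅ (c : RectCurve X x y) (s : ℝ) (_ : s ∈ Set.Icc 0 c.T) (_ : c.toFun s = z),
    c.lengthInUpTo A s

/-- Topological separating set from `x` to `y`. -/
def IsSepSet {X : Type*} [MetricSpace X] (x y : X) (Ω : Set X) : Prop :=
  IsClosed Ω ∧ ∃ r > 0, Metric.ball x r ⊆ interior Ω ∧ Metric.ball y r ⊆ Ωᶜ

/-- Path-separating set between `x` and `y`: every rectifiable curve from `x`
to `y` meets `A`. -/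
def IsPathSep {X : Type*} [MetricSpace X] (x y : X) (A : Set X) : Prop :=
  ∀ c : RectCurve X x y, ∃ t ∈ Set.Icc 0 c.T, c.toFun t ∈ A

/-- Minkowski content of `Ω` with respect to `μ`. -/
def mink {X : Type*} [MetricSpace X] [MeasurableSpace X] (μ : Measure X) (Ω : Set X) : ℝ≥0∞ :=
  Filter.liminf (fun r : ℝ => μ (Metric.cthickening r Ω \ Ω) / ENNReal.ofReal r)
    (nhdsWithin 0 (Set.Ioi 0))

/-- The Riesz density with poles at `x` and `y` (it vanishes at the poles). -/
def rieszDensity {X : Type*} [MetricSpace X] [MeasurableSpace X] (m : Measure X) (x y : X) (z : X) : ℝ≥0∞ :=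
  ENNReal.ofReal (dist x z) / m (Metric.ball x (dist x z))
    + ENNReal.ofReal (dist y z) / m (Metric.ball y (dist y z))

/-- The `L`-truncated Riesz measure `m_{x,y}^L`. -/
def rieszMeasure {X : Type*} [MetricSpace X] [MeasurableSpace X] (m : Measure X) (x y : X) (L : ℝ) :
    Measure X :=
  m.withDensity
    ((Metric.ball x (2 * L * dist x y) ∪ Metric.ball y (2 * L * dist x y)).indicator
      (rieszDensity m x y))

/-- The local Lipschitz constant `lip u (z)` (with value `0` at isolated points,
since the limsup along the empty filter is `⊥`). -/
def lipConst {X : Type*} [MetricSpace X] (u : X → ℝ) (z : X) : ℝ≥0∞ :=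
  Filter.limsup (fun w => ENNReal.ofReal (|u w - u z| / dist w z))
    (nhdsWithin z {z}ᶜ)

/-- `m` is `C`-doubling. -/
def IsDoubling {X : Type*} [MetricSpace X] [MeasurableSpace X] (m : Measure X) (C : ℝ≥0) : Prop :=
  ∀ (z : X) (r : ℝ), 0 < r → m (Metric.ball z (2 * r)) ≤ C * m (Metric.ball z r)

/-- The separating ratio `m(A)/width_{x,y}(A)`, with the conventions that it is
`∞` when the width vanishes and `0` when the width is infinite. -/
def sepRatio {X : Type*} [MetricSpace X] [MeasurableSpace X] (m : Measure X) (x y : X) (A : Set X) : ℝ≥0∞ :=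
  if width x y A = 0 then ⊤ else m A / width x y A

/-- The support of the measure `m`. -/
def msupport {X : Type*} [MetricSpace X] [MeasurableSpace X] (m : Measure X) : Set X :=
  {z | ∀ r > 0, 0 < m (Metric.ball z r)}

/-- Line integral of a nonnegative density along a rectifiable curve
(in its `1`-Lipschitz parametrization). -/
def lineIntegral {X : Type*} [MetricSpace X] {x y : X}
    (c : RectCurve X x y) (ρ : X → ℝ≥0∞) : ℝ≥0∞ :=
  ∫⁻ t in Set.Icc (0 : ℝ) c.T, ρ (c.toFun t)

/-- Admissible densities for a family of curves. -/
def Adm {X : Type*} [MetricSpace X] [MeasurableSpace X] {x y : X} (Γ : Set (RectCurve X x y)) :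
    Set (X → ℝ≥0∞) :=
  {ρ | Measurable ρ ∧ ∀ c ∈ Γ, 1 ≤ lineIntegral c ρ}

/-- The `p`-modulus of a family of curves with respect to the measure `ν`. -/
def Modulus {X : Type*} [MetricSpace X] [MeasurableSpace X] {x y : X} (p : ℝ)
    (Γ : Set (RectCurve X x y)) (ν : Measure X) : ℝ≥0∞ :=
  ⨅ ρ ∈ Adm Γ, ∫⁻ z, ρ z ^ p ∂ν

end

noncomputable section Aux

namespace RectCurve

variable {X : Type*} [MetricSpace X] {x y z w : X}

lemma dist_le (c : RectCurve X x y) {a b : ℝ} (ha : a ∈ Set.Icc 0 c.T)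
    (hb : b ∈ Set.Icc 0 c.T) : dist (c.toFun a) (c.toFun b) ≤ |a - b| := by
  have := lipschitzOnWith_iff_dist_le_mul.mp c.lip a ha b hb
  simpa [Real.dist_eq] using this

/-- Concatenation of two rectifiable curves. -/
def concat (c1 : RectCurve X x y) (c2 : RectCurve X y z) : RectCurve X x z where
  T := c1.T + c2.T
  T_nonneg := by have := c1.T_nonneg; have := c2.T_nonneg; linarith
  toFun t := if t ≤ c1.T then c1.toFun t else c2.toFun (t - c1.T)
  lip := by
    rw [lipschitzOnWith_iff_dist_le_mul]
    have key : ∀ a ∈ Set.Icc 0 (c1.T + c2.T), ∀ b ∈ Set.Icc 0 (c1.T + c2.T), a ≤ b →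
        dist (if a ≤ c1.T then c1.toFun a else c2.toFun (a - c1.T))
          (if b ≤ c1.T then c1.toFun b else c2.toFun (b - c1.T)) ≤ b - a := by
      intro a ha b hb hab
      by_cases hb1 : b ≤ c1.T
      · have ha1 : a ≤ c1.T := le_trans hab hb1
        rw [if_pos ha1, if_pos hb1]
        have := c1.dist_le (a := a) (b := b) ⟨ha.1, ha1⟩ ⟨le_trans ha.1 hab, hb1⟩
        rw [abs_sub_comm, abs_of_nonneg (by linarith)] at this
        exact this
      · push_neg at hb1
        have hb2 : b - c1.T ∈ Set.Icc 0 c2.T := ⟨by linarith, by linarith [hb.2]⟩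
        by_cases ha1 : a ≤ c1.T
        · rw [if_pos ha1, if_neg (not_le.mpr hb1)]
          have h1 := c1.dist_le (a := a) (b := c1.T) ⟨ha.1, ha1⟩
            ⟨c1.T_nonneg, le_refl _⟩
          have h2 := c2.dist_le (a := 0) (b := b - c1.T) ⟨le_refl _, c2.T_nonneg⟩ hb2
          rw [abs_sub_comm, abs_of_nonneg (by linarith)] at h1
          rw [abs_sub_comm, abs_of_nonneg (by linarith)] at h2
          rw [c1.target] at h1
          rw [c2.source] at h2
          have htri := dist_triangle (c1.toFun a) y (c2.toFun (b - c1.T))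
          linarith
        · push_neg at ha1
          rw [if_neg (not_le.mpr ha1), if_neg (not_le.mpr hb1)]
          have ha2 : a - c1.T ∈ Set.Icc 0 c2.T := ⟨by linarith, by linarith [ha.2]⟩
          have := c2.dist_le ha2 hb2
          rw [abs_sub_comm, abs_of_nonneg (by linarith)] at this
          calc dist (c2.toFun (a - c1.T)) (c2.toFun (b - c1.T)) ≤ (b - c1.T) - (a - c1.T) := this
            _ = b - a := by ring
    intro a ha b hb
    rcases le_total a b with h | h
    · have := key a ha b hb h
      calc _ ≤ b - a := this
        _ ≤ _ := by rw [Real.dist_eq]; simp only [NNReal.coe_one, one_mul]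
                    exact le_trans (by linarith [abs_sub_comm a b ▸ le_abs_self (b - a)]) le_rfl
    · have := key b hb a ha h
      rw [dist_comm]
      calc _ ≤ a - b := this
        _ ≤ _ := by rw [Real.dist_eq]; simp only [NNReal.coe_one, one_mul]
                    exact le_trans (le_abs_self _) le_rfl
  source := by
    show (if (0:ℝ) ≤ c1.T then c1.toFun 0 else c2.toFun (0 - c1.T)) = x
    rw [if_pos c1.T_nonneg, c1.source]
  target := by
    show (if c1.T + c2.T ≤ c1.T then c1.toFun (c1.T + c2.T)
      else c2.toFun (c1.T + c2.T - c1.T)) = z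
    rcases eq_or_lt_of_le c2.T_nonneg with h | h
    · have e0 : c1.T + c2.T = c1.T := by rw [← h, add_zero]
      rw [if_pos (le_of_eq e0), e0, c1.target, ← c2.source, h, c2.target]
    · rw [if_neg (by push_neg; linarith), add_sub_cancel_left, c2.target]

@[simp] lemma concat_T (c1 : RectCurve X x y) (c2 : RectCurve X y z) :
    (c1.concat c2).T = c1.T + c2.T := rfl

lemma concat_apply_left (c1 : RectCurve X x y) (c2 : RectCurve X y z) {t : ℝ}
    (h : t ≤ c1.T) : (c1.concat c2).toFun t = c1.toFun t := if_pos h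

lemma concat_apply_right (c1 : RectCurve X x y) (c2 : RectCurve X y z) {t : ℝ}
    (h : c1.T < t) : (c1.concat c2).toFun t = c2.toFun (t - c1.T) := if_neg (not_le.mpr h)

lemma concat_apply_add (c1 : RectCurve X x y) (c2 : RectCurve X y z) {t : ℝ}
    (ht : t ∈ Set.Icc 0 c2.T) : (c1.concat c2).toFun (c1.T + t) = c2.toFun t := by
  rcases eq_or_lt_of_le ht.1 with h0 | h0
  · rw [← h0, add_zero, concat_apply_left _ _ le_rfl, c1.target]
    exact c2.source.symm
  · rw [concat_apply_right _ _ (by linarith), add_sub_cancel_left]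

/-- Reversal of a rectifiable curve. -/
def reverse (c : RectCurve X x y) : RectCurve X y x where
  T := c.T
  T_nonneg := c.T_nonneg
  toFun t := c.toFun (c.T - t)
  lip := by
    rw [lipschitzOnWith_iff_dist_le_mul]
    intro a ha b hb
    have ha' : c.T - a ∈ Set.Icc 0 c.T := ⟨by linarith [ha.2], by linarith [ha.1]⟩
    have hb' : c.T - b ∈ Set.Icc 0 c.T := ⟨by linarith [hb.2], by linarith [hb.1]⟩
    have := c.dist_le ha' hb'
    calc dist (c.toFun (c.T - a)) (c.toFun (c.T - b)) ≤ |c.T - a - (c.T - b)| := this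
      _ = |b - a| := by ring_nf
      _ = ↑(1 : ℝ≥0) * dist a b := by rw [Real.dist_eq, abs_sub_comm]; simp
  source := by show c.toFun (c.T - 0) = y; rw [sub_zero, c.target]
  target := by show c.toFun (c.T - c.T) = x; rw [sub_self, c.source]

@[simp] lemma reverse_T (c : RectCurve X x y) : c.reverse.T = c.T := rfl

lemma reverse_apply (c : RectCurve X x y) (t : ℝ) :
    c.reverse.toFun t = c.toFun (c.T - t) := rfl

/-- Initial piece of a curve, up to time `s`, as a curve to the point `z = c s`. -/
def restrictTo (c : RectCurve X x y) (s : ℝ) (hs : s ∈ Set.Icc 0 c.T)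
    (hz : c.toFun s = z) : RectCurve X x z where
  T := s
  T_nonneg := hs.1
  toFun := c.toFun
  lip := c.lip.mono (Set.Icc_subset_Icc le_rfl hs.2)
  source := c.source
  target := hz

/-- Final piece of a curve, from time `s` on, as a curve from the point `z = c s`. -/
def restrictFrom (c : RectCurve X x y) (s : ℝ) (hs : s ∈ Set.Icc 0 c.T)
    (hz : c.toFun s = z) : RectCurve X z y where
  T := c.T - s
  T_nonneg := by linarith [hs.2]
  toFun t := c.toFun (t + s)
  lip := by
    rw [lipschitzOnWith_iff_dist_le_mul]
    intro a ha b hb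
    have ha' : a + s ∈ Set.Icc 0 c.T := ⟨by linarith [ha.1, hs.1], by linarith [ha.2]⟩
    have hb' : b + s ∈ Set.Icc 0 c.T := ⟨by linarith [hb.1, hs.1], by linarith [hb.2]⟩
    have := c.dist_le ha' hb'
    calc dist (c.toFun (a + s)) (c.toFun (b + s)) ≤ |a + s - (b + s)| := this
      _ = ↑(1 : ℝ≥0) * dist a b := by rw [Real.dist_eq]; ring_nf; simp
  source := by show c.toFun (0 + s) = z; rw [zero_add, hz]
  target := by show c.toFun (c.T - s + s) = y; rw [sub_add_cancel, c.target]

lemma lengthIn_le (c : RectCurve X x y) (A : Set X) :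
    c.lengthIn A ≤ ENNReal.ofReal c.T := by
  rw [lengthIn, lengthInUpTo]
  calc volume {t : ℝ | t ∈ Set.Icc 0 (min c.T c.T) ∧ c.toFun t ∈ A}
      ≤ volume (Set.Icc (0:ℝ) c.T) := by
        apply measure_mono; intro t ht; rw [min_self] at ht; exact ht.1
    _ = ENNReal.ofReal c.T := by rw [Real.volume_Icc, sub_zero]

lemma lengthIn_eq_zero (c : RectCurve X x y) (A : Set X)
    (h : ∀ t ∈ Set.Icc 0 c.T, c.toFun t ∉ A) : c.lengthIn A = 0 := by
  rw [lengthIn, lengthInUpTo]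
  convert measure_empty (μ := volume)
  ext t
  simp only [Set.mem_setOf_eq, Set.mem_empty_iff_false, iff_false, not_and, min_self]
  exact fun ht => h t ht

end RectCurve

section KeyLemmas

variable {X : Type*} [MetricSpace X] {x y z w : X} {A : Set X}

open RectCurve

/-- Splicing a detour into a curve: the key estimate for the position function. -/
lemma posFn_splice (c : RectCurve X x y) {s : ℝ} (hs : s ∈ Set.Icc 0 c.T)
    (hz : c.toFun s = z) (d : RectCurve X z w) :
    posFn x y A w ≤ c.lengthInUpTo A s + d.lengthIn A := by
  set c1 : RectCurve X x z := c.restrictTo s hs hz with hc1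
  set c2 : RectCurve X z y := c.restrictFrom s hs hz with hc2
  set e : RectCurve X x y := ((c1.concat d).concat d.reverse).concat c2 with he
  have hdT := d.T_nonneg
  have hc1T : c1.T = s := rfl
  have heT : e.T = s + d.T + d.T + (c.T - s) := rfl
  set s' : ℝ := s + d.T with hs'
  have hs'mem : s' ∈ Set.Icc 0 e.T := by
    constructor
    · simp only [hs', heT]; linarith [hs.1]
    · rw [heT]; linarith [hs.2]
  -- value at s'
  have he_w : e.toFun s' = w := by
    have h1 : e.toFun s' = ((c1.concat d).concat d.reverse).toFun s' :=
      concat_apply_left _ _ (by rw [concat_T, concat_T, reverse_T, hc1T]; linarith)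
    rw [h1]
    have h2 : ((c1.concat d).concat d.reverse).toFun s' = (c1.concat d).toFun s' :=
      concat_apply_left _ _ (by rw [concat_T, hc1T])
    rw [h2]
    have h3 : (c1.concat d).toFun (c1.T + d.T) = d.toFun d.T :=
      concat_apply_add _ _ ⟨hdT, le_rfl⟩
    rw [hs', ← hc1T] at *
    rw [h3, d.target]
  -- values before s
  have he_left : ∀ t ∈ Set.Icc (0:ℝ) s, e.toFun t = c.toFun t := by
    intro t ht
    have h1 : e.toFun t = ((c1.concat d).concat d.reverse).toFun t :=
      concat_apply_left _ _ (by rw [concat_T, concat_T, reverse_T, hc1T]; linarith [ht.2])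
    have h2 : ((c1.concat d).concat d.reverse).toFun t = (c1.concat d).toFun t :=
      concat_apply_left _ _ (by rw [concat_T, hc1T]; linarith [ht.2])
    have h3 : (c1.concat d).toFun t = c1.toFun t :=
      concat_apply_left _ _ (by rw [hc1T]; exact ht.2)
    rw [h1, h2, h3]; rfl
  -- values in (s, s']
  have he_mid : ∀ t ∈ Set.Ioc s s', e.toFun t = d.toFun (t - s) := by
    intro t ht
    have h1 : e.toFun t = ((c1.concat d).concat d.reverse).toFun t :=
      concat_apply_left _ _ (by rw [concat_T, concat_T, reverse_T, hc1T]; linarith [ht.2])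
    have h2 : ((c1.concat d).concat d.reverse).toFun t = (c1.concat d).toFun t :=
      concat_apply_left _ _ (by rw [concat_T, hc1T]; exact ht.2)
    have h3 : (c1.concat d).toFun t = d.toFun (t - c1.T) :=
      concat_apply_right _ _ (by rw [hc1T]; exact ht.1)
    rw [h1, h2, h3, hc1T]
  -- the bound on the length up to s'
  have hbound : e.lengthInUpTo A s' ≤ c.lengthInUpTo A s + d.lengthIn A := by
    rw [RectCurve.lengthInUpTo]
    have hmin : min s' e.T = s' := min_eq_left (by rw [heT]; linarith [hs.2])
    rw [hmin]
    have hsub : {t : ℝ | t ∈ Set.Icc 0 s' ∧ e.toFun t ∈ A} ⊆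
        {t : ℝ | t ∈ Set.Icc 0 (min s c.T) ∧ c.toFun t ∈ A} ∪
        ((fun t => t + (-s)) ⁻¹' {u : ℝ | u ∈ Set.Icc 0 (min d.T d.T) ∧ d.toFun u ∈ A}) := by
      intro t ⟨ht, htA⟩
      by_cases hts : t ≤ s
      · left
        have := he_left t ⟨ht.1, hts⟩
        refine ⟨⟨ht.1, ?_⟩, this ▸ htA⟩
        exact le_min hts (le_trans hts hs.2)
      · right
        push_neg at hts
        have := he_mid t ⟨hts, ht.2⟩
        simp only [Set.mem_preimage, Set.mem_setOf_eq, min_self]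
        constructor
        · constructor
          · simp only [← sub_eq_add_neg]; linarith
          · simp only [← sub_eq_add_neg]; rw [hs'] at ht; linarith [ht.2]
        · simp only [← sub_eq_add_neg]; exact this ▸ htA
    calc volume {t : ℝ | t ∈ Set.Icc 0 s' ∧ e.toFun t ∈ A}
        ≤ volume ({t : ℝ | t ∈ Set.Icc 0 (min s c.T) ∧ c.toFun t ∈ A} ∪
          ((fun t => t + (-s)) ⁻¹' {u : ℝ | u ∈ Set.Icc 0 (min d.T d.T) ∧ d.toFun u ∈ A})) :=
          measure_mono hsub
      _ ≤ volume {t : ℝ | t ∈ Set.Icc 0 (min s c.T) ∧ c.toFun t ∈ A} +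
          volume ((fun t => t + (-s)) ⁻¹' {u : ℝ | u ∈ Set.Icc 0 (min d.T d.T) ∧ d.toFun u ∈ A}) :=
          measure_union_le _ _
      _ = c.lengthInUpTo A s + d.lengthIn A := by
          rw [measure_preimage_add_right]
          rfl
  calc posFn x y A w ≤ e.lengthInUpTo A s' := by
        exact iInf_le_of_le e (iInf_le_of_le s' (iInf_le_of_le hs'mem (iInf_le_of_le he_w le_rfl)))
    _ ≤ _ := hbound

/-- Moving the basepoint along a connecting curve. -/
lemma posFn_le_add (d : RectCurve X z w) :
    posFn x y A w ≤ posFn x y A z + d.lengthIn A := by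
  simp_rw [posFn, ENNReal.iInf_add]
  exact le_iInf fun c => le_iInf fun s => le_iInf fun hs => le_iInf fun hz =>
    posFn_splice c hs hz d

lemma posFn_ne_top (hrc : ∀ a b : X, Nonempty (RectCurve X a b)) (p : X) :
    posFn x y A p ≠ ⊤ := by
  obtain ⟨c1⟩ := hrc x p
  obtain ⟨c2⟩ := hrc p y
  set e := c1.concat c2 with he
  have hmem : c1.T ∈ Set.Icc 0 e.T := ⟨c1.T_nonneg, by rw [concat_T]; linarith [c2.T_nonneg]⟩
  have hp : e.toFun c1.T = p := by rw [concat_apply_left _ _ le_rfl, c1.target]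
  have h1 : posFn x y A p ≤ e.lengthInUpTo A c1.T :=
    iInf_le_of_le e (iInf_le_of_le c1.T (iInf_le_of_le hmem (iInf_le_of_le hp le_rfl)))
  refine ne_top_of_le_ne_top ?_ h1
  rw [RectCurve.lengthInUpTo]
  have : {t : ℝ | t ∈ Set.Icc 0 (min c1.T e.T) ∧ e.toFun t ∈ A} ⊆ Set.Icc 0 c1.T := by
    intro t ht; exact ⟨ht.1.1, le_trans ht.1.2 (min_le_left _ _)⟩
  exact ne_top_of_le_ne_top (by rw [Real.volume_Icc]; exact ENNReal.ofReal_ne_top)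
    (measure_mono this)

end KeyLemmas

end Aux
open RectCurve in
theorem stmt9 {X : Type*} [MetricSpace X]
    (hrc : ∀ a b : X, Nonempty (RectCurve X a b))
    (x y : X) (A : Set X) :
    (∀ (z : X) (Λ : ℝ), 1 ≤ Λ →
        (∃ r > 0, ∀ w ∈ Metric.ball z r, ∃ c : RectCurve X z w, c.T ≤ Λ * dist z w) →
        lipConst (fun p => (posFn x y A p).toReal) z ≤ ENNReal.ofReal Λ) ∧
    (∀ z : X, z ∉ closure A →
        (∀ p : X, ∃ r > 0, ∃ Λ : ℝ, 1 ≤ Λ ∧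
          ∀ w ∈ Metric.ball p r, ∃ c : RectCurve X p w, c.T ≤ Λ * dist p w) →
        lipConst (fun p => (posFn x y A p).toReal) z = 0) ∧
    (∀ Λ : ℝ≥0, 1 ≤ Λ →
        (∀ a b : X, ∃ c : RectCurve X a b, (c.T : ℝ) ≤ Λ * dist a b) →
        LipschitzWith Λ (fun p => (posFn x y A p).toReal)) := by
    classical
  set u : X → ℝ := fun p => (posFn x y A p).toReal with hu
  have hfin : ∀ p : X, posFn x y A p ≠ ⊤ := posFn_ne_top hrc
  -- one-sided estimate from a connecting curve
  have one : ∀ (z w : X) (M : ℝ) (d : RectCurve X z w), d.T ≤ M → u w ≤ u z + M := by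
    intro z w M d hd
    have h1 : posFn x y A w ≤ posFn x y A z + ENNReal.ofReal M :=
      le_trans (posFn_le_add d)
        (add_le_add_right (le_trans (d.lengthIn_le A) (ENNReal.ofReal_le_ofReal hd)) _)
    have h2 : posFn x y A z + ENNReal.ofReal M ≠ ⊤ :=
      ENNReal.add_ne_top.mpr ⟨hfin z, ENNReal.ofReal_ne_top⟩
    have h3 := ENNReal.toReal_mono h2 h1
    rw [ENNReal.toReal_add (hfin z) ENNReal.ofReal_ne_top,
      ENNReal.toReal_ofReal (le_trans d.T_nonneg hd)] at h3
    exact h3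
  refine ⟨?_, ?_, ?_⟩
  · -- pointwise quasiconvexity gives lip bound
    intro z Λ hΛ h
    obtain ⟨r, hr, hq⟩ := h
    rw [lipConst]
    refine Filter.limsup_le_of_le (by isBoundedDefault) ?_
    filter_upwards [nhdsWithin_le_nhds (Metric.ball_mem_nhds z hr), self_mem_nhdsWithin]
      with w' hw' hwz
    have hwz' : w' ≠ z := hwz
    apply ENNReal.ofReal_le_ofReal
    have hd0 : 0 < dist w' z := dist_pos.mpr hwz'
    rw [div_le_iff₀ hd0]
    obtain ⟨d, hd⟩ := hq w' hw'
    rw [dist_comm z w'] at hd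
    have hle1 := one z w' _ d hd
    have hle2 := one w' z _ d.reverse (show d.reverse.T ≤ Λ * dist w' z from hd)
    rw [abs_sub_le_iff]
    constructor <;> linarith
  · -- locally constant away from the closure of A
    intro z hz hq
    obtain ⟨r, hr, Λ, hΛ, hq'⟩ := hq z
    have hΛ0 : (0:ℝ) < Λ := by linarith
    have hmem : (closure A)ᶜ ∈ nhds z := (isClosed_closure.isOpen_compl).mem_nhds hz
    obtain ⟨ε, hε, hball⟩ := Metric.mem_nhds_iff.mp hmem
    set δ : ℝ := min r (ε / Λ) with hδ
    have hδ0 : 0 < δ := lt_min hr (div_pos hε hΛ0)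
    have hconst : ∀ w' ∈ Metric.ball z δ, u w' = u z := by
      intro w' hw'
      obtain ⟨d, hd⟩ := hq' w' (Metric.ball_subset_ball (min_le_left _ _) hw')
      have hdist : dist z w' < δ := by rw [dist_comm]; exact hw'
      have hTε : d.T < ε := by
        calc d.T ≤ Λ * dist z w' := hd
          _ < Λ * δ := mul_lt_mul_of_pos_left hdist hΛ0
          _ ≤ Λ * (ε / Λ) := mul_le_mul_of_nonneg_left (min_le_right _ _) (le_of_lt hΛ0)
          _ = ε := mul_div_cancel₀ ε (ne_of_gt hΛ0)
      have havoid : ∀ t ∈ Set.Icc 0 d.T, d.toFun t ∉ A := by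
        intro t ht hA
        have h1 : dist (d.toFun t) (d.toFun 0) ≤ |t - 0| :=
          d.dist_le ⟨ht.1, ht.2⟩ ⟨le_rfl, d.T_nonneg⟩
        rw [sub_zero, abs_of_nonneg ht.1, d.source] at h1
        have hmemb : d.toFun t ∈ Metric.ball z ε := by
          rw [Metric.mem_ball]
          calc dist (d.toFun t) z ≤ t := h1
            _ ≤ d.T := ht.2
            _ < ε := hTε
        exact hball hmemb (subset_closure hA)
      have e1 : posFn x y A w' ≤ posFn x y A z := by
        have h := posFn_le_add (x := x) (y := y) (A := A) d
        rwa [d.lengthIn_eq_zero A havoid, add_zero] at h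
      have e2 : posFn x y A z ≤ posFn x y A w' := by
        have hav2 : ∀ t ∈ Set.Icc 0 d.reverse.T, d.reverse.toFun t ∉ A := by
          intro t ht
          rw [RectCurve.reverse_T] at ht
          rw [RectCurve.reverse_apply]
          exact havoid _ ⟨by linarith [ht.2], by linarith [ht.1]⟩
        have h := posFn_le_add (x := x) (y := y) (A := A) d.reverse
        rwa [d.reverse.lengthIn_eq_zero A hav2, add_zero] at h
      exact congrArg ENNReal.toReal (le_antisymm e1 e2)
    rw [lipConst]
    refine le_antisymm ?_ zero_le
    refine Filter.limsup_le_of_le (by isBoundedDefault) ?_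
    filter_upwards [nhdsWithin_le_nhds (Metric.ball_mem_nhds z hδ0)] with w' hw'
    rw [hconst w' hw', sub_self, abs_zero, zero_div, ENNReal.ofReal_zero]
  · -- global quasiconvexity gives Lipschitz
    intro Λ hΛ hq
    apply LipschitzWith.of_dist_le_mul
    intro a b
    obtain ⟨d1, hd1⟩ := hq b a
    obtain ⟨d2, hd2⟩ := hq a b
    rw [dist_comm b a] at hd1
    have h1 := one b a _ d1 hd1
    have h2 := one a b _ d2 hd2
    rw [Real.dist_eq, abs_sub_le_iff]
    constructor <;> linarith
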